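/- In any tree decomposition of a graph G containing the complete bipartite graph K_{p,q} as a subgraph (with sides A of size p and B of size q), there is a bag that contains all of A or a bag that contains all of B. -/

import Mathlib

/-- `B : Fin m → Finset V` is a path decomposition of `G`: every vertex is in some
bag, every edge is contained in some bag, and each vertex's bags form an interval. -/
def IsPathDecomp {V : Type} (G : SimpleGraph V) {m : ℕ} (B : Fin m → Finset V) : Prop :=
  (∀ v : V, ∃ i, v ∈ B i) ∧
  (∀ u v : V, G.Adj u v → ∃ i, u ∈ B i ∧ v ∈ B i) ∧
  (∀ (v : V) (i j l : Fin m), i ≤ j → j ≤ l → v ∈ B i → v ∈ B l → v ∈ B j)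

/-- The path-width of `G`: the least `k` such that `G` has a path decomposition
all of whose bags have at most `k + 1` vertices. -/
noncomputable def pathwidth {V : Type} (G : SimpleGraph V) : ℕ :=
  sInf {k | ∃ (m : ℕ) (B : Fin m → Finset V),
    IsPathDecomp G B ∧ ∀ i, (B i).card ≤ k + 1}

/-- `(T, B)` is a tree decomposition of `G`: `T` is a tree, every vertex is in some
bag, every edge is contained in some bag, and each vertex's bags induce a subtree
(a connected subgraph) of `T`. -/
def IsTreeDecomp {V I : Type} (G : SimpleGraph V) (T : SimpleGraph I) (B : I → Finset V) : Prop :=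
  T.IsTree ∧
  (∀ v : V, ∃ i, v ∈ B i) ∧
  (∀ u v : V, G.Adj u v → ∃ i, u ∈ B i ∧ v ∈ B i) ∧
  (∀ v : V, (T.induce {i : I | v ∈ B i}).Connected)

/-- The tree-width of `G`: the least `k` such that `G` has a tree decomposition
all of whose bags have at most `k + 1` vertices. -/
noncomputable def treewidth {V : Type} (G : SimpleGraph V) : ℕ :=
  sInf {k | ∃ (I : Type) (T : SimpleGraph I) (B : I → Finset V),
    IsTreeDecomp G T B ∧ ∀ i, (B i).card ≤ k + 1}


open SimpleGraph

variable {I : Type} {T : SimpleGraph I}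

/-- A set of tree nodes is path-convex. -/
def TDConv (T : SimpleGraph I) (S : Set I) : Prop :=
  ∀ ⦃x y : I⦄, x ∈ S → y ∈ S → ∀ w : T.Walk x y, w.IsPath → ∀ k ∈ w.support, k ∈ S

lemma TDConv.inter {S S' : Set I} (h : TDConv T S) (h' : TDConv T S') :
    TDConv T (S ∩ S') := fun _ _ hx hy w hw k hk =>
  ⟨h hx.1 hy.1 w hw k hk, h' hx.2 hy.2 w hw k hk⟩

lemma path_support_unique (hu : ∀ ⦃x y : I⦄ (p q : T.Path x y), p = q)
    {x y : I} {w w' : T.Walk x y} (h : w.IsPath) (h' : w'.IsPath) :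
    w.support = w'.support := by
  have : w = w' := congrArg Subtype.val (hu ⟨w, h⟩ ⟨w', h'⟩)
  rw [this]

lemma firstSat (Q : I → Prop) :
    ∀ {x y : I} (P : T.Walk x y), ¬ Q x → Q y →
    ∃ (c d : I) (P₁ : T.Walk x c) (h : T.Adj c d) (P₂ : T.Walk d y),
      P = P₁.append (Walk.cons h P₂) ∧ (∀ u ∈ P₁.support, ¬ Q u) ∧ Q d := by
  intro x y P
  induction P with
  | nil => intro hx hy; exact absurd hy hx
  | @cons u v w h P' ih =>
    intro hx hy
    by_cases hv : Q v
    · exact ⟨u, v, Walk.nil, h, P', rfl, by simpa using hx, hv⟩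
    · obtain ⟨c, d, P₁, h', P₂, heq, hP₁, hd⟩ := ih hv hy
      refine ⟨c, d, Walk.cons h P₁, h', P₂, ?_, ?_, hd⟩
      · rw [Walk.cons_append, heq]
      · intro z hz
        rw [Walk.support_cons, List.mem_cons] at hz
        rcases hz with rfl | hz
        · exact hx
        · exact hP₁ z hz

lemma walkInduce {s : Set I} :
    ∀ {u v : s} (_w : (T.induce s).Walk u v), ∃ w' : T.Walk u.1 v.1, ∀ k ∈ w'.support, k ∈ s := by
  intro u v w
  induction w with
  | nil => exact ⟨Walk.nil, by simpa using u.2⟩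
  | @cons a b c h w ih =>
    obtain ⟨w', hw'⟩ := ih
    refine ⟨Walk.cons (by exact h) w', ?_⟩
    intro k hk
    change k ∈ (a.1 :: w'.support) at hk
    rw [List.mem_cons] at hk
    rcases hk with rfl | hk
    · exact a.2
    · exact hw' k hk

lemma tdMedian [DecidableEq I] (hu : ∀ ⦃x y : I⦄ (p q : T.Path x y), p = q)
    {x y z : I} {pxy : T.Walk x y} {pyz : T.Walk y z} {pxz : T.Walk x z}
    (h1 : pxy.IsPath) (h2 : pyz.IsPath) (h3 : pxz.IsPath) :
    ∃ m, m ∈ pxy.support ∧ m ∈ pyz.support ∧ m ∈ pxz.support := by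
  by_cases hx : x ∈ pyz.support
  · exact ⟨x, pxy.start_mem_support, hx, pxz.start_mem_support⟩
  · obtain ⟨c, d, P₁, hadj, P₂, hPeq, hP₁, hd⟩ :=
      firstSat (· ∈ pyz.support) pxy hx pyz.start_mem_support
    set D := pyz.dropUntil d hd with hD
    set w' : T.Walk x z := (P₁.append (Walk.cons hadj Walk.nil)).append D with hw'def
    have hws : w'.support = P₁.support ++ D.support := by
      rw [hw'def, Walk.support_append, Walk.support_append, Walk.support_cons, Walk.support_nil]
      simp only [List.tail_cons, List.append_assoc, List.singleton_append]
      rw [← Walk.support_eq_cons]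
    have hP1nodup : P₁.support.Nodup := by
      have : pxy.support = P₁.support ++ P₂.support := by
        rw [hPeq, Walk.support_append, Walk.support_cons, List.tail_cons]
      have h := h1.support_nodup
      rw [this, List.nodup_append] at h
      exact h.1
    have hDnodup : D.support.Nodup := (h2.dropUntil hd).support_nodup
    have hdisj : ∀ a ∈ P₁.support, a ∉ D.support := fun a ha haD =>
      hP₁ a ha (Walk.support_dropUntil_subset pyz hd haD)
    have hw' : w'.IsPath := by
      rw [Walk.isPath_def, hws]
      exact List.Nodup.append hP1nodup hDnodup hdisj
    refine ⟨d, ?_, hd, ?_⟩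
    · rw [hPeq, Walk.mem_support_append_iff]
      exact Or.inr (by simp)
    · rw [path_support_unique hu h3 hw', hws]
      exact List.mem_append_right _ D.start_mem_support

lemma tdHelly3 [DecidableEq I] (hu : ∀ ⦃x y : I⦄ (p q : T.Path x y), p = q)
    (hr : ∀ x y : I, T.Reachable x y)
    {C1 C2 C3 : Set I} (h1 : TDConv T C1) (h2 : TDConv T C2) (h3 : TDConv T C3)
    (h12 : (C1 ∩ C2).Nonempty) (h13 : (C1 ∩ C3).Nonempty) (h23 : (C2 ∩ C3).Nonempty) :
    (C1 ∩ C2 ∩ C3).Nonempty := by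
  obtain ⟨x, hx1, hx2⟩ := h12
  obtain ⟨y, hy1, hy3⟩ := h13
  obtain ⟨z, hz2, hz3⟩ := h23
  obtain ⟨wxy⟩ := hr x y
  obtain ⟨wyz⟩ := hr y z
  obtain ⟨wxz⟩ := hr x z
  obtain ⟨m, hm1, hm2, hm3⟩ := tdMedian hu wxy.bypass_isPath wyz.bypass_isPath wxz.bypass_isPath
  exact ⟨m, ⟨h1 hx1 hy1 _ wxy.bypass_isPath m hm1, h2 hx2 hz2 _ wxz.bypass_isPath m hm3⟩,
    h3 hy3 hz3 _ wyz.bypass_isPath m hm2⟩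

lemma tdHellyFin {α : Type} [DecidableEq I] (hu : ∀ ⦃x y : I⦄ (p q : T.Path x y), p = q)
    (hr : ∀ x y : I, T.Reachable x y) (s : Finset α) :
    ∀ S : α → Set I, s.Nonempty → (∀ a ∈ s, TDConv T (S a)) →
      (∀ a ∈ s, ∀ b ∈ s, (S a ∩ S b).Nonempty) → ∃ i, ∀ a ∈ s, i ∈ S a := by
  classical
  induction s using Finset.induction_on with
  | empty => intro _ h; simp at h
  | @insert a s ha ih =>
    intro S hne hconv hpair
    rcases s.eq_empty_or_nonempty with rfl | hs
    · obtain ⟨i, hi, _⟩ := hpair a (Finset.mem_insert_self a _) a (Finset.mem_insert_self a _)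
      exact ⟨i, by simpa using hi⟩
    · have hamem : a ∈ insert a s := Finset.mem_insert_self a s
      obtain ⟨i, hi⟩ := ih (fun b => S b ∩ S a) hs
        (fun b hb => (hconv b (Finset.mem_insert_of_mem hb)).inter (hconv a hamem))
        (by
          intro b hb b' hb'
          have hb1 : b ∈ insert a s := Finset.mem_insert_of_mem hb
          have hb1' : b' ∈ insert a s := Finset.mem_insert_of_mem hb'
          have := tdHelly3 hu hr (hconv b hb1) (hconv b' hb1') (hconv a hamem)
            (hpair b hb1 b' hb1') (hpair b hb1 a hamem) (hpair b' hb1' a hamem)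
          obtain ⟨j, ⟨hj1, hj2⟩, hj3⟩ := this
          exact ⟨j, ⟨hj1, hj3⟩, hj2, hj3⟩)
      refine ⟨i, ?_⟩
      intro b hb
      rcases Finset.mem_insert.mp hb with rfl | hb
      · obtain ⟨b', hb'⟩ := hs
        exact (hi b' hb').2
      · exact (hi b hb).1

lemma tdSeparator [DecidableEq I] (hu : ∀ ⦃x y : I⦄ (p q : T.Path x y), p = q)
    (hr : ∀ x y : I, T.Reachable x y)
    {S1 S2 : Set I} (h1 : TDConv T S1) (h2 : TDConv T S2)
    (hdj : ∀ i, i ∈ S1 → i ∈ S2 → False)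
    {i1 i2 : I} (hi1 : i1 ∈ S1) (hi2 : i2 ∈ S2) :
    ∃ c, ∀ C : Set I, TDConv T C → (C ∩ S1).Nonempty → (C ∩ S2).Nonempty → c ∈ C := by
  obtain ⟨w0⟩ := hr i1 i2
  set P := w0.bypass with hPdef
  have hP : P.IsPath := w0.bypass_isPath
  obtain ⟨c, d, P₁, hadj, P₂, hPeq, hP₁', hd⟩ :=
    firstSat (· ∉ S1) P (by simpa using hi1) (fun h => hdj i2 h hi2)
  have hP₁ : ∀ u ∈ P₁.support, u ∈ S1 := fun u hu' => not_not.mp (hP₁' u hu')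
  have hcS1 : c ∈ S1 := hP₁ c P₁.end_mem_support
  -- the component of c in T minus the edge (c,d)
  set U : Set I := {u | ∃ w : T.Walk c u, s(c, d) ∉ w.edges} with hUdef
  have hcU : c ∈ U := ⟨Walk.nil, by simp⟩
  have hcdPath : (Walk.cons hadj Walk.nil).IsPath := by simp [hadj.ne]
  have hdU : d ∉ U := by
    rintro ⟨w, hw⟩
    have : w.bypass = Walk.cons hadj Walk.nil :=
      congrArg Subtype.val (hu ⟨w.bypass, w.bypass_isPath⟩ ⟨Walk.cons hadj Walk.nil, hcdPath⟩)
    have he : s(c, d) ∈ w.bypass.edges := by simp [this]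
    exact hw (w.edges_bypass_subset he)
  have hcross : ∀ {u u' : I}, u ∈ U → u' ∉ U → ∀ w : T.Walk u u', c ∈ w.support := by
    intro u u' huU hu'U w
    by_cases he : s(c, d) ∈ w.edges
    · exact w.fst_mem_support_of_mem_edges he
    · obtain ⟨w0', hw0'⟩ := huU
      exact absurd ⟨w0'.append w, by rw [Walk.edges_append]; simp [hw0', he]⟩ hu'U
  have hS1U : ∀ z ∈ S1, z ∈ U := by
    intro z hz
    obtain ⟨w⟩ := hr c z
    refine ⟨w.bypass, fun he => ?_⟩
    have : d ∈ w.bypass.support := w.bypass.snd_mem_support_of_mem_edges he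
    exact hd (h1 hcS1 hz _ w.bypass_isPath d this)
  -- c does not lie in P₂
  have hcP₂ : c ∉ P₂.support := by
    have hsup : P.support = P₁.support ++ P₂.support := by
      rw [hPeq, Walk.support_append, Walk.support_cons, List.tail_cons]
    have h := hP.support_nodup
    rw [hsup, List.nodup_append] at h
    exact fun hc => h.2.2 c P₁.end_mem_support c hc rfl
  have hS2U : ∀ z ∈ S2, z ∉ U := by
    rintro z hz ⟨w, hwe⟩
    obtain ⟨w1⟩ := hr z i2
    have hw1e : s(c, d) ∉ w1.bypass.edges := fun he =>
      hdj c (hcS1) (h2 hz hi2 _ w1.bypass_isPath c (w1.bypass.fst_mem_support_of_mem_edges he))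
    have hw2e : s(c, d) ∉ P₂.edges := fun he => hcP₂ (P₂.fst_mem_support_of_mem_edges he)
    exact hdU ⟨(w.append w1.bypass).append P₂.reverse, by
      rw [Walk.edges_append, Walk.edges_append]
      simp [hwe, hw1e, hw2e, Walk.edges_reverse]⟩
  refine ⟨c, ?_⟩
  rintro C hC ⟨x, hxC, hxS1⟩ ⟨y, hyC, hyS2⟩
  obtain ⟨w⟩ := hr x y
  exact hC hxC hyC _ w.bypass_isPath c (hcross (hS1U x hxS1) (hS2U y hyS2) w.bypass)

/-- In any tree decomposition of a graph containing `K_{p,q}` as a subgraph with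
sides `A` and `B`, some bag contains all of `A` or some bag contains all of `B`. -/
theorem bag_contains_side (V I : Type) (G : SimpleGraph V) (T : SimpleGraph I)
    (Bags : I → Finset V) (htd : IsTreeDecomp G T Bags)
    (p q : ℕ) (A B : Finset V) (hA : A.card = p) (hB : B.card = q)
    (hdisj : Disjoint A B) (hbip : ∀ a ∈ A, ∀ b ∈ B, G.Adj a b) :
    (∃ i, A ⊆ Bags i) ∨ (∃ i, B ⊆ Bags i) := by
  classical
  obtain ⟨htree, hvert, hedge, hconn⟩ := htd
  have hu : ∀ ⦃x y : I⦄ (p' q' : T.Path x y), p' = q' :=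
    SimpleGraph.isAcyclic_iff_path_unique.mp htree.2
  have hcT : T.Connected := htree.1
  have hr : ∀ x y : I, T.Reachable x y := fun x y => hcT.preconnected x y
  set S : V → Set I := fun v => {i | v ∈ Bags i} with hSdef
  have hSconv : ∀ v : V, TDConv T (S v) := by
    intro v x y hx hy w hw k hk
    obtain ⟨w₀⟩ := (hconn v).preconnected ⟨x, hx⟩ ⟨y, hy⟩
    obtain ⟨w', hw'⟩ := walkInduce w₀
    have hsup := path_support_unique hu hw w'.bypass_isPath
    exact hw' k (SimpleGraph.Walk.support_bypass_subset _ (hsup ▸ hk))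
  rcases A.eq_empty_or_nonempty with rfl | hAne
  · obtain ⟨i⟩ := hcT.nonempty
    exact Or.inl ⟨i, by simp⟩
  rcases B.eq_empty_or_nonempty with rfl | hBne
  · obtain ⟨i⟩ := hcT.nonempty
    exact Or.inr ⟨i, by simp⟩
  by_cases hp : ∀ a ∈ A, ∀ a' ∈ A, (S a ∩ S a').Nonempty
  · obtain ⟨i, hi⟩ := tdHellyFin hu hr A S hAne (fun a _ => hSconv a) hp
    exact Or.inl ⟨i, fun a ha => hi a ha⟩
  · push_neg at hp
    obtain ⟨a1, ha1, a2, ha2, hne12⟩ := hp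
    have hdj : ∀ i, i ∈ S a1 → i ∈ S a2 → False := fun i h1 h2 =>
      Set.eq_empty_iff_forall_notMem.mp hne12 i ⟨h1, h2⟩
    obtain ⟨i1, hi1⟩ := hvert a1
    obtain ⟨i2, hi2⟩ := hvert a2
    obtain ⟨c, hc⟩ := tdSeparator hu hr (hSconv a1) (hSconv a2) hdj hi1 hi2
    refine Or.inr ⟨c, fun b hb => ?_⟩
    obtain ⟨j1, hj1a, hj1b⟩ := hedge a1 b (hbip a1 ha1 b hb)
    obtain ⟨j2, hj2a, hj2b⟩ := hedge a2 b (hbip a2 ha2 b hb)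
    exact hc (S b) (hSconv b) ⟨j1, hj1b, hj1a⟩ ⟨j2, hj2b, hj2a⟩
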